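/- If I_G is a maximal independent set of G and I_H is a maximal independent set of H, then I_G × I_H is an independent set in the Cartesian product G □ H, and the graph obtained from G □ H by removing the closed neighborhood of I_G × I_H equals the Cartesian product (G - I_G) □ (H - I_H). -/

import Mathlib

open SimpleGraph

/-- `S` dominates `G`: every vertex is in `S` or adjacent to a vertex of `S`. -/
def Dominates {V : Type*} (G : SimpleGraph V) (S : Set V) : Prop :=
  ∀ v : V, v ∈ S ∨ ∃ u ∈ S, G.Adj u v

/-- `S` is a minimal dominating set of `G`. -/
def MinDom {V : Type*} (G : SimpleGraph V) (S : Set V) : Prop :=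
  Dominates G S ∧ ∀ T : Set V, T ⊂ S → ¬ Dominates G T

/-- `G` is well-dominated: all minimal dominating sets have the same cardinality. -/
def WellDom {V : Type*} (G : SimpleGraph V) : Prop :=
  ∀ S T : Set V, MinDom G S → MinDom G T → S.ncard = T.ncard

/-- `I` is an independent set of `G`. -/
def IndepSet {V : Type*} (G : SimpleGraph V) (I : Set V) : Prop :=
  ∀ a ∈ I, ∀ b ∈ I, ¬ G.Adj a b

/-- `I` is a maximal independent set of `G`. -/
def MaxIndep {V : Type*} (G : SimpleGraph V) (I : Set V) : Prop :=
  IndepSet G I ∧ ∀ J : Set V, IndepSet G J → I ⊆ J → J = I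

/-- The closed neighborhood `N[S]` of a set of vertices. -/
def closedNbhd {V : Type*} (G : SimpleGraph V) (S : Set V) : Set V :=
  {v | v ∈ S ∨ ∃ u ∈ S, G.Adj u v}

lemma maxIndep_dominates {V : Type*} (G : SimpleGraph V) (I : Set V)
    (h : MaxIndep G I) : Dominates G I := by
  intro v
  by_contra hc
  push_neg at hc
  obtain ⟨hv, hadj⟩ := hc
  have hJ : IndepSet G (insert v I) := by
    intro a ha b hb hab
    rcases ha with rfl | ha
    · rcases hb with rfl | hb
      · exact G.irrefl hab
      · exact hadj b hb (hab.symm)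
    · rcases hb with rfl | hb
      · exact hadj a ha hab
      · exact h.1 a ha b hb hab
  have := h.2 _ hJ (Set.subset_insert v I)
  exact hv (this ▸ Set.mem_insert v I)

theorem stmt6 {V W : Type*} (G : SimpleGraph V) (H : SimpleGraph W)
    (IG : Set V) (IH : Set W) (hG : MaxIndep G IG) (hH : MaxIndep H IH) :
    IndepSet (G □ H) (IG ×ˢ IH) ∧
    (closedNbhd (G □ H) (IG ×ˢ IH))ᶜ = (IGᶜ ×ˢ IHᶜ : Set (V × W)) ∧
    Nonempty (((G □ H).induce (closedNbhd (G □ H) (IG ×ˢ IH))ᶜ) ≃g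
      ((G.induce IGᶜ) □ (H.induce IHᶜ))) := by
  have hset : (closedNbhd (G □ H) (IG ×ˢ IH))ᶜ = (IGᶜ ×ˢ IHᶜ : Set (V × W)) := by
    ext ⟨g, h⟩
    simp only [closedNbhd, Set.mem_compl_iff, Set.mem_setOf_eq, Set.mem_prod,
      boxProd_adj, not_or, not_exists]
    constructor
    · rintro ⟨h1, h2⟩
      constructor
      · intro hg
        rcases maxIndep_dominates H IH hH h with hh | ⟨w, hw, hadj⟩
        · exact h1 ⟨hg, hh⟩
        · exact h2 (g, w) ⟨⟨hg, hw⟩, Or.inr ⟨hadj, rfl⟩⟩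
      · intro hh
        rcases maxIndep_dominates G IG hG g with hg | ⟨u, hu, hadj⟩
        · exact h1 ⟨hg, hh⟩
        · exact h2 (u, h) ⟨⟨hu, hh⟩, Or.inl ⟨hadj, rfl⟩⟩
    · rintro ⟨hg, hh⟩
      refine ⟨fun hx => hg hx.1, ?_⟩
      rintro ⟨u, w⟩ ⟨⟨hu, hw⟩, hadj | hadj⟩
      · exact hh (hadj.2 ▸ hw)
      · exact hg (hadj.2 ▸ hu)
  refine ⟨?_, hset, ?_⟩
  · rintro ⟨a1, a2⟩ ⟨ha1, ha2⟩ ⟨b1, b2⟩ ⟨hb1, hb2⟩ hadj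
    rcases hadj with ⟨h1, h2⟩ | ⟨h1, h2⟩
    · exact hG.1 a1 ha1 b1 hb1 h1
    · exact hH.1 a2 ha2 b2 hb2 h1
  · rw [hset]
    refine ⟨⟨⟨fun x => (⟨x.1.1, x.2.1⟩, ⟨x.1.2, x.2.2⟩), fun p => ⟨(p.1.1, p.2.1), p.1.2, p.2.2⟩,
      fun x => rfl, fun p => rfl⟩, ?_⟩⟩
    rintro ⟨⟨a1, a2⟩, ha⟩ ⟨⟨b1, b2⟩, hb⟩
    simp [boxProd_adj, Subtype.ext_iff]
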